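/- Gromov hyperbolicity is a quasi-isometry invariant among geodesic metric spaces: if X and Y are geodesic metric spaces, X is δ-hyperbolic for some δ, and there is a quasi-isometry from X to Y, then Y is δ′-hyperbolic for some constant δ′. -/

import Mathlib

open Set

set_option maxHeartbeats 1000000

/-- A unit-speed geodesic from `x` to `y`, defined on `[0, dist x y]`. -/
def IsGeodesicFromTo {X : Type*} [MetricSpace X] (γ : ℝ → X) (x y : X) : Prop :=
  γ 0 = x ∧ γ (dist x y) = y ∧
    ∀ s ∈ Icc 0 (dist x y), ∀ t ∈ Icc 0 (dist x y), dist (γ s) (γ t) = |s - t|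

/-- A geodesic metric space: every pair of points is joined by a geodesic. -/
def GeodesicSpace (X : Type*) [MetricSpace X] : Prop :=
  ∀ x y : X, ∃ γ : ℝ → X, IsGeodesicFromTo γ x y

/-- The geodesic segment from `x` to `y` traced by `γ`. -/
def geodSeg {X : Type*} [MetricSpace X] (γ : ℝ → X) (x y : X) : Set X :=
  γ '' Icc 0 (dist x y)

/-- Every geodesic triangle in `X` is `δ`-thin: each side is contained in the
`δ`-neighborhood of the union of the other two sides. -/
def ThinTriangles (X : Type*) [MetricSpace X] (δ : ℝ) : Prop :=
  ∀ (x y z : X) (γ₁ γ₂ γ₃ : ℝ → X),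
    IsGeodesicFromTo γ₁ x y → IsGeodesicFromTo γ₂ y z → IsGeodesicFromTo γ₃ z x →
    ∀ p ∈ geodSeg γ₁ x y, ∃ q ∈ geodSeg γ₂ y z ∪ geodSeg γ₃ z x, dist p q ≤ δ

/-- A quasi-isometry between metric spaces. -/
def IsQuasiIsometry {X Y : Type*} [MetricSpace X] [MetricSpace Y]
    (f : X → Y) : Prop :=
  ∃ lam C : ℝ, 1 ≤ lam ∧ 0 ≤ C ∧
    (∀ x x' : X,
      lam⁻¹ * dist x x' - C ≤ dist (f x) (f x') ∧
      dist (f x) (f x') ≤ lam * dist x x' + C) ∧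
    ∀ y : Y, ∃ x : X, dist y (f x) ≤ C

/-! ### Auxiliary machinery: the Morse lemma for discrete quasi-geodesic chains -/

section Aux

variable {X : Type*} [MetricSpace X]

lemma mem_geodSeg {γ : ℝ → X} {x y p : X} :
    p ∈ geodSeg γ x y ↔ ∃ t ∈ Icc 0 (dist x y), γ t = p := Iff.rfl

/-- Distances from the ends along a geodesic segment. -/
lemma geod_dist_ends {γ : ℝ → X} {x y : X} (h : IsGeodesicFromTo γ x y)
    {z : X} (hz : z ∈ geodSeg γ x y) :
    dist x z ≤ dist x y ∧ dist z y ≤ dist x y := by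
  obtain ⟨t, ht, rfl⟩ := hz
  have h0 : (0 : ℝ) ∈ Icc 0 (dist x y) := ⟨le_rfl, dist_nonneg⟩
  have hdm : dist x y ∈ Icc 0 (dist x y) := ⟨dist_nonneg, le_rfl⟩
  constructor
  · have e := h.2.2 0 h0 t ht
    rw [h.1] at e
    rw [e, zero_sub, abs_neg, abs_of_nonneg ht.1]
    exact ht.2
  · have e := h.2.2 t ht (dist x y) hdm
    rw [h.2.1] at e
    rw [e, abs_of_nonpos (by linarith [ht.2]), neg_sub]
    linarith [ht.1]

lemma clog_le_sqrt (m : ℕ) : Nat.clog 2 m ≤ 2 * Nat.sqrt m := by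
  rw [Nat.clog_le_iff_le_pow (by norm_num : 1 < 2)]
  have key : ∀ s : ℕ, s * s + 2 * s ≤ 4 ^ s := by
    intro s
    induction s with
    | zero => simp
    | succ t ih =>
      have h1 : t + 1 ≤ 4 ^ t := Nat.lt_pow_self (n := t) (by norm_num)
      have h3 : 3 * (t + 1) ≤ 3 * 4 ^ t := Nat.mul_le_mul_left 3 h1
      calc (t+1) * (t+1) + 2 * (t+1) = (t * t + 2 * t) + (2 * t + 3) := by ring
        _ ≤ 4 ^ t + (2 * t + 3) := by omega
        _ ≤ 4 ^ t + 3 * 4 ^ t := by omega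
        _ = 4 ^ (t+1) := by ring
  have h4 : m ≤ 4 ^ Nat.sqrt m := by
    have h5 := Nat.lt_succ_sqrt m
    have h6 := key (Nat.sqrt m)
    nlinarith [h5, h6]
  calc m ≤ 4 ^ Nat.sqrt m := h4
    _ = 2 ^ (2 * Nat.sqrt m) := by rw [pow_mul]; norm_num

lemma clog_half (n half : ℕ) (h2 : 2 ≤ n) (hh : half ≤ (n+1)/2) :
    Nat.clog 2 half + 1 ≤ Nat.clog 2 n := by
  have hk : 0 < Nat.clog 2 n := Nat.clog_pos (by norm_num) h2
  obtain ⟨k', hk'⟩ : ∃ k', Nat.clog 2 n = k' + 1 := ⟨Nat.clog 2 n - 1, by omega⟩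
  have hn : n ≤ 2 ^ (k' + 1) := by
    rw [← hk']; exact Nat.le_pow_clog (by norm_num) n
  have hp : 2 ^ (k' + 1) = 2 * 2 ^ k' := by ring
  have hhalf : half ≤ 2 ^ k' := by omega
  have := (Nat.clog_le_iff_le_pow (by norm_num : 1 < 2)).2 hhalf
  omega

/-- Upper bound on distances along a chain with gaps at most `D`. -/
lemma chain_dist {D : ℝ} (n : ℕ) (c : ℕ → X)
    (hgap : ∀ i < n, dist (c i) (c (i+1)) ≤ D) :
    ∀ b ≤ n, ∀ a ≤ b, dist (c a) (c b) ≤ D * ((b : ℝ) - (a : ℝ)) := by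
  intro b
  induction b with
  | zero =>
    intro _ a ha
    have : a = 0 := Nat.le_zero.mp ha
    subst this
    simp
  | succ k ih =>
    intro hk a ha
    rcases Nat.eq_or_lt_of_le ha with rfl | ha'
    · simp
    · have ha2 : a ≤ k := by omega
      have h1 := ih (by omega) a ha2
      have h2 := hgap k (by omega)
      have h3 := dist_triangle (c a) (c k) (c (k+1))
      have h4 : D * (((k:ℝ)+1) - (a:ℝ)) = D * ((k:ℝ) - (a:ℝ)) + D := by ring
      push_cast
      linarith

/-- The "logarithmic" lemma: in a space with `δ`-thin triangles, any point on a
geodesic joining the endpoints of a chain with gaps `≤ D` is at distance at most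
`δ * log₂(n) + D` from the chain. -/
lemma log_lemma (hX : GeodesicSpace X) {δ D : ℝ} (hδ : 0 ≤ δ) (hD : 0 ≤ D)
    (hthin : ThinTriangles X δ) :
    ∀ (n : ℕ) (c : ℕ → X), (∀ i < n, dist (c i) (c (i + 1)) ≤ D) →
      ∀ γ : ℝ → X, IsGeodesicFromTo γ (c 0) (c n) →
        ∀ p ∈ geodSeg γ (c 0) (c n),
          ∃ i ≤ n, dist p (c i) ≤ δ * (Nat.clog 2 n : ℝ) + D := by
  intro n
  induction n using Nat.strong_induction_on with
  | _ n ih =>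
    intro c hgap γ hγ p hp
    rcases Nat.lt_or_ge n 2 with h2 | h2
    · obtain ⟨t, ht, rfl⟩ := hp
      have h0mem : (0 : ℝ) ∈ Icc 0 (dist (c 0) (c n)) := ⟨le_rfl, dist_nonneg⟩
      have e := hγ.2.2 t ht 0 h0mem
      rw [hγ.1] at e
      have habs : |t - 0| = t := by rw [sub_zero]; exact abs_of_nonneg ht.1
      have hpt : dist (γ t) (c 0) ≤ dist (c 0) (c n) := by rw [e, habs]; exact ht.2
      refine ⟨0, Nat.zero_le _, ?_⟩
      have hpos : 0 ≤ δ * (Nat.clog 2 n : ℝ) := by positivity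
      interval_cases n
      · have : dist (γ t) (c 0) ≤ 0 := by simpa using hpt
        linarith
      · have h01 := hgap 0 (by norm_num)
        have : dist (γ t) (c 0) ≤ D := le_trans hpt h01
        linarith
    · have hm1 : 1 ≤ (n+1)/2 := by omega
      have hmn : (n+1)/2 < n := by omega
      have hnm1 : 1 ≤ n - (n+1)/2 := by omega
      have hnmn : n - (n+1)/2 < n := by omega
      set m := (n+1)/2 with hm
      obtain ⟨β₂, hβ₂⟩ := hX (c n) (c m)
      obtain ⟨β₃, hβ₃⟩ := hX (c m) (c 0)
      obtain ⟨q, hq, hpq⟩ := hthin (c 0) (c n) (c m) γ β₂ β₃ hγ hβ₂ hβ₃ p hp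
      have hclog2 : ∀ half : ℕ, half ≤ (n+1)/2 →
          (δ * (Nat.clog 2 half : ℝ) + D) + δ ≤ δ * (Nat.clog 2 n : ℝ) + D := by
        intro half hh
        have h := clog_half n half h2 hh
        have hc : ((Nat.clog 2 half : ℝ) + 1) ≤ (Nat.clog 2 n : ℝ) := by exact_mod_cast h
        nlinarith [mul_le_mul_of_nonneg_left hc hδ]
      rcases hq with hq | hq
      · -- q on the geodesic from c n to c m
        set c' : ℕ → X := fun i => c (n - i) with hc'
        have e0 : c' 0 = c n := by simp [hc']
        have e1 : c' (n - m) = c m := by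
          simp only [hc']; congr 1; omega
        have hgap' : ∀ i < n - m, dist (c' i) (c' (i+1)) ≤ D := by
          intro i hi
          have h1 : n - i = (n - i - 1) + 1 := by omega
          have h2' : n - (i+1) = n - i - 1 := by omega
          simp only [hc', h2']
          rw [h1, dist_comm]
          exact hgap (n - i - 1) (by omega)
        have hβ₂' : IsGeodesicFromTo β₂ (c' 0) (c' (n-m)) := by rw [e0, e1]; exact hβ₂
        have hq' : q ∈ geodSeg β₂ (c' 0) (c' (n-m)) := by rw [e0, e1]; exact hq
        obtain ⟨i, hi, hqi⟩ := ih (n-m) hnmn c' hgap' β₂ hβ₂' q hq'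
        refine ⟨n - i, by omega, ?_⟩
        have htri := dist_triangle p q (c' i)
        have hcc : c' i = c (n - i) := rfl
        rw [hcc] at htri
        have hfin := hclog2 (n - m) (by omega)
        linarith
      · -- q on the geodesic from c m to c 0
        set c'' : ℕ → X := fun i => c (m - i) with hc''
        have e0 : c'' 0 = c m := by simp [hc'']
        have e1 : c'' m = c 0 := by simp only [hc'']; congr 1; omega
        have hgap'' : ∀ i < m, dist (c'' i) (c'' (i+1)) ≤ D := by
          intro i hi
          have h1 : m - i = (m - i - 1) + 1 := by omega
          have h2' : m - (i+1) = m - i - 1 := by omega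
          simp only [hc'', h2']
          rw [h1, dist_comm]
          exact hgap (m - i - 1) (by omega)
        have hβ₃' : IsGeodesicFromTo β₃ (c'' 0) (c'' m) := by rw [e0, e1]; exact hβ₃
        have hq' : q ∈ geodSeg β₃ (c'' 0) (c'' m) := by rw [e0, e1]; exact hq
        obtain ⟨i, hi, hqi⟩ := ih m hmn c'' hgap'' β₃ hβ₃' q hq'
        refine ⟨m - i, by omega, ?_⟩
        have htri := dist_triangle p q (c'' i)
        have hcc : c'' i = c (m - i) := rfl
        rw [hcc] at htri
        have hfin := hclog2 m le_rfl
        linarith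

/-- The quadrilateral lemma: a point on one side of a geodesic quadrilateral
`a' b' b a` is `2δ`-close to the union of the other three sides. -/
lemma quad (hX : GeodesicSpace X) {δ : ℝ} (hδ : 0 ≤ δ) (hthin : ThinTriangles X δ)
    (a' b' a b : X) (γ' : ℝ → X) (hγ' : IsGeodesicFromTo γ' a' b')
    (p : X) (hp : p ∈ geodSeg γ' a' b') :
    ∃ z : X, dist p z ≤ 2 * δ ∧
      ((dist a' z ≤ dist a' a ∧ dist z a ≤ dist a' a) ∨
       (dist b' z ≤ dist b b' ∧ dist z b ≤ dist b b') ∨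
       ∃ ζ : ℝ → X, IsGeodesicFromTo ζ a b ∧ z ∈ geodSeg ζ a b) := by
  obtain ⟨γ₂, hγ₂⟩ := hX b' b
  obtain ⟨γ₃, hγ₃⟩ := hX b a'
  obtain ⟨z₁, hz₁, hd₁⟩ := hthin a' b' b γ' γ₂ γ₃ hγ' hγ₂ hγ₃ p hp
  rcases hz₁ with hz₁ | hz₁
  · have h := geod_dist_ends hγ₂ hz₁
    refine ⟨z₁, by linarith, Or.inr (Or.inl ⟨?_, ?_⟩)⟩
    · rw [dist_comm b b']; exact h.1
    · rw [dist_comm b b']; exact h.2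
  · obtain ⟨γ₂', hγ₂'⟩ := hX a' a
    obtain ⟨γ₃', hγ₃'⟩ := hX a b
    obtain ⟨z₂, hz₂, hd₂⟩ := hthin b a' a γ₃ γ₂' γ₃' hγ₃ hγ₂' hγ₃' z₁ hz₁
    have hdp : dist p z₂ ≤ 2 * δ :=
      le_trans (dist_triangle p z₁ z₂) (by linarith)
    rcases hz₂ with hz₂ | hz₂
    · exact ⟨z₂, hdp, Or.inl (geod_dist_ends hγ₂' hz₂)⟩
    · exact ⟨z₂, hdp, Or.inr (Or.inr ⟨γ₃', hγ₃', hz₂⟩)⟩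

/-- Stability constant for quasi-geodesic chains. -/
noncomputable def R1 (δ D lam Λ : ℝ) : ℝ :=
  2*δ + D + 2*δ*(12*lam*δ + (12*lam*δ + 6*lam*D + Λ) + 1)

lemma R1_nonneg {δ D lam Λ : ℝ} (hδ : 0 ≤ δ) (hD : 0 ≤ D) (hlam : 1 ≤ lam)
    (hΛ : 0 ≤ Λ) : 0 ≤ R1 δ D lam Λ := by
  have hl : (0:ℝ) ≤ lam := by linarith
  unfold R1
  nlinarith [mul_nonneg (mul_nonneg hδ hl) hδ, mul_nonneg (mul_nonneg hδ hl) hD,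
    mul_nonneg hδ hΛ]

noncomputable def R2 (δ D lam Λ : ℝ) : ℝ :=
  D * (lam * (2 * R1 δ D lam Λ + 1) + Λ) + R1 δ D lam Λ

lemma R2_nonneg {δ D lam Λ : ℝ} (hδ : 0 ≤ δ) (hD : 0 ≤ D) (hlam : 1 ≤ lam)
    (hΛ : 0 ≤ Λ) : 0 ≤ R2 δ D lam Λ := by
  have hl : (0:ℝ) ≤ lam := by linarith
  have h1 := R1_nonneg hδ hD hlam hΛ
  have h2 : (0:ℝ) ≤ lam * (2 * R1 δ D lam Λ + 1) + Λ := by nlinarith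
  have h3 := mul_nonneg hD h2
  unfold R2
  linarith

end Aux

section Morse

variable {X : Type*} [MetricSpace X]

/-- Morse stability, part 1: every point of a geodesic joining the ends of a
quasi-geodesic chain is `R1`-close to the chain. -/
lemma morse1 {δ D lam Λ : ℝ} (hδ : 0 ≤ δ) (hD : 0 ≤ D) (hlam : 1 ≤ lam) (hΛ : 0 ≤ Λ)
    (hX : GeodesicSpace X) (hthin : ThinTriangles X δ)
    (n : ℕ) (c : ℕ → X) (hgap : ∀ i < n, dist (c i) (c (i + 1)) ≤ D)
    (hlow : ∀ i ≤ n, ∀ j ≤ n, |(i : ℝ) - (j : ℝ)| ≤ lam * dist (c i) (c j) + Λ)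
    (γ : ℝ → X) (hγ : IsGeodesicFromTo γ (c 0) (c n)) :
    ∀ p ∈ geodSeg γ (c 0) (c n), ∃ i ≤ n, dist p (c i) ≤ R1 δ D lam Λ := by
  classical
  have hl0 : (0:ℝ) ≤ lam := by linarith
  set d := dist (c 0) (c n) with hd
  set K : Set X := c '' Set.Iic n with hK
  have hKc : IsCompact K := ((Set.finite_Iic n).image c).isCompact
  have hKne : K.Nonempty := ⟨c 0, ⟨0, Set.mem_Iic.mpr (Nat.zero_le n), rfl⟩⟩
  have hd0 : 0 ≤ d := dist_nonneg
  have hγlip : LipschitzOnWith 1 γ (Icc 0 d) := by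
    apply LipschitzOnWith.of_dist_le_mul
    intro s hs t ht
    rw [hγ.2.2 s hs t ht, Real.dist_eq, NNReal.coe_one, one_mul]
  have hFc : ContinuousOn (fun t => Metric.infDist (γ t) K) (Icc 0 d) :=
    (Metric.continuous_infDist_pt K).comp_continuousOn hγlip.continuousOn
  have hIccne : (Icc (0:ℝ) d).Nonempty := ⟨0, le_rfl, hd0⟩
  obtain ⟨t₀, ht₀, hmax⟩ := isCompact_Icc.exists_isMaxOn hIccne hFc
  set Δ := Metric.infDist (γ t₀) K with hΔ
  have hmax' : ∀ t ∈ Icc (0:ℝ) d, Metric.infDist (γ t) K ≤ Δ := fun t ht => hmax ht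
  have hΔ0 : 0 ≤ Δ := Metric.infDist_nonneg
  have hinf_le : ∀ t, ∀ k ≤ n, Metric.infDist (γ t) K ≤ dist (γ t) (c k) :=
    fun t k hk => Metric.infDist_le_dist_of_mem ⟨k, Set.mem_Iic.mpr hk, rfl⟩
  have hsq0 : 0 ≤ Real.sqrt (6*lam*Δ + Λ) := Real.sqrt_nonneg _
  have h2δsq : 0 ≤ 2*δ*Real.sqrt (6*lam*Δ + Λ) := mul_nonneg (by linarith) hsq0
  have hkey : Δ ≤ 2*δ + D + 2*δ * Real.sqrt (6*lam*Δ + Λ) := by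
    set tm := max 0 (t₀ - 2*Δ) with htmdef
    set tp := min d (t₀ + 2*Δ) with htpdef
    have htm_mem : tm ∈ Icc (0:ℝ) d :=
      ⟨le_max_left _ _, max_le hd0 (by linarith [ht₀.2])⟩
    have htp_mem : tp ∈ Icc (0:ℝ) d :=
      ⟨le_min hd0 (by linarith [ht₀.1]), min_le_left _ _⟩
    have hm0 : tm ≤ t₀ := max_le ht₀.1 (by linarith)
    have h0p : t₀ ≤ tp := le_min ht₀.2 (by linarith)
    obtain ⟨zi, hziK, hFtm⟩ := hKc.exists_infDist_eq_dist hKne (γ tm)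
    obtain ⟨i, hi', rfl⟩ := hziK
    have hi : i ≤ n := Set.mem_Iic.mp hi'
    obtain ⟨zj, hzjK, hFtp⟩ := hKc.exists_infDist_eq_dist hKne (γ tp)
    obtain ⟨j, hj', rfl⟩ := hzjK
    have hj : j ≤ n := Set.mem_Iic.mp hj'
    have hFm : dist (γ tm) (c i) ≤ Δ := by rw [← hFtm]; exact hmax' tm htm_mem
    have hFp : dist (γ tp) (c j) ≤ Δ := by rw [← hFtp]; exact hmax' tp htp_mem
    have hdist' : dist (γ tm) (γ tp) = tp - tm := by
      rw [hγ.2.2 tm htm_mem tp htp_mem, abs_sub_comm,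
        abs_of_nonneg (by linarith : (0:ℝ) ≤ tp - tm)]
    set γ' : ℝ → X := fun s => γ (s + tm) with hγ'def
    have hγ'geo : IsGeodesicFromTo γ' (γ tm) (γ tp) := by
      refine ⟨by simp [hγ'def], ?_, ?_⟩
      · show γ (dist (γ tm) (γ tp) + tm) = γ tp
        rw [hdist']
        congr 1
        ring
      · intro s hs t ht
        rw [hdist'] at hs ht
        have hs' : s + tm ∈ Icc 0 d :=
          ⟨by linarith [hs.1, htm_mem.1], by linarith [hs.2, htp_mem.2]⟩
        have ht' : t + tm ∈ Icc 0 d :=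
          ⟨by linarith [ht.1, htm_mem.1], by linarith [ht.2, htp_mem.2]⟩
        show dist (γ (s + tm)) (γ (t + tm)) = |s - t|
        rw [hγ.2.2 _ hs' _ ht']
        congr 1
        ring
    have hp₀ : γ t₀ ∈ geodSeg γ' (γ tm) (γ tp) := by
      refine ⟨t₀ - tm, ?_, ?_⟩
      · rw [hdist']; exact ⟨by linarith, by linarith⟩
      · show γ (t₀ - tm + tm) = γ t₀
        congr 1
        ring
    obtain ⟨z, hpz, hcase⟩ :=
      quad hX hδ hthin (γ tm) (γ tp) (c i) (c j) γ' hγ'geo (γ t₀) hp₀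
    rcases hcase with ⟨h1, h2⟩ | ⟨h1, h2⟩ | ⟨ζ, hζ, hz⟩
    · -- near the start of the restricted geodesic
      have hΔle : Δ ≤ dist (γ t₀) (c i) := hinf_le t₀ i hi
      have htri := dist_triangle (γ t₀) z (c i)
      rcases le_or_gt (t₀ - 2*Δ) 0 with hc0 | hc0
      · have htm0 : tm = 0 := max_eq_left hc0
        have hzero : dist (γ tm) (c i) = 0 := by
          rw [← hFtm, htm0]
          have hmem : γ (0:ℝ) ∈ K := by
            rw [hγ.1]; exact ⟨0, Set.mem_Iic.mpr (Nat.zero_le n), rfl⟩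
          exact Metric.infDist_zero_of_mem hmem
        rw [hzero] at h2
        linarith
      · have htm : tm = t₀ - 2*Δ := max_eq_right (by linarith)
        have hdt : dist (γ t₀) (γ tm) = 2*Δ := by
          rw [hγ.2.2 t₀ ht₀ tm htm_mem, htm,
            abs_of_nonneg (by linarith : (0:ℝ) ≤ t₀ - (t₀ - 2*Δ))]
          ring
        have htri2 := dist_triangle (γ t₀) z (γ tm)
        have hcm := dist_comm z (γ tm)
        -- dist (γ tm) z ≤ dist (γ tm) (c i) ≤ Δ
        linarith
    · -- near the end of the restricted geodesic
      have hΔle : Δ ≤ dist (γ t₀) (c j) := hinf_le t₀ j hj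
      have htri := dist_triangle (γ t₀) z (c j)
      rcases le_or_gt d (t₀ + 2*Δ) with hc0 | hc0
      · have htp0 : tp = d := min_eq_left hc0
        have hzero : dist (c j) (γ tp) = 0 := by
          rw [dist_comm, ← hFtp, htp0]
          have hmem : γ d ∈ K := by
            rw [hd, hγ.2.1]; exact ⟨n, Set.mem_Iic.mpr le_rfl, rfl⟩
          exact Metric.infDist_zero_of_mem hmem
        rw [hzero] at h2
        have hcm := dist_comm z (c j)
        linarith
      · have htp : tp = t₀ + 2*Δ := min_eq_right (by linarith)
        have hdt : dist (γ t₀) (γ tp) = 2*Δ := by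
          rw [hγ.2.2 t₀ ht₀ tp htp_mem, htp,
            abs_of_nonpos (by linarith : t₀ - (t₀ + 2*Δ) ≤ 0)]
          ring
        have htri2 := dist_triangle (γ t₀) z (γ tp)
        have hcm := dist_comm z (γ tp)
        have hcm2 := dist_comm (c j) (γ tp)
        linarith
    · -- the middle case: z lies on a geodesic from c i to c j
      have h5 : dist (γ tm) (γ tp) ≤ 4*Δ := by
        rw [hdist']
        have ha : tp ≤ t₀ + 2*Δ := min_le_right _ _
        have hb : t₀ - 2*Δ ≤ tm := le_max_right _ _
        linarith
      have hij6 : dist (c i) (c j) ≤ 6*Δ := by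
        have h4 := dist_triangle4 (c i) (γ tm) (γ tp) (c j)
        have hcm := dist_comm (c i) (γ tm)
        linarith
      have main : ∀ nm : ℕ, ∀ mid : ℕ → X, mid 0 = c i → mid nm = c j →
          (∀ k < nm, dist (mid k) (mid (k+1)) ≤ D) →
          (∀ k ≤ nm, ∃ l ≤ n, mid k = c l) →
          ((nm : ℝ) ≤ 6*lam*Δ + Λ) →
          Δ ≤ 2*δ + D + 2*δ * Real.sqrt (6*lam*Δ + Λ) := by
        intro nm mid e0 e1 hgapm hsub hnm_le
        have hζ' : IsGeodesicFromTo ζ (mid 0) (mid nm) := by rw [e0, e1]; exact hζ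
        have hz' : z ∈ geodSeg ζ (mid 0) (mid nm) := by rw [e0, e1]; exact hz
        obtain ⟨k, hk, hzk⟩ := log_lemma hX hδ hD hthin nm mid hgapm ζ hζ' z hz'
        obtain ⟨l, hl, hml⟩ := hsub k hk
        have hΔle : Δ ≤ dist (γ t₀) (c l) := hinf_le t₀ l hl
        have htri := dist_triangle (γ t₀) z (mid k)
        rw [hml] at htri hzk
        have hclog : (Nat.clog 2 nm : ℝ) ≤ 2 * Real.sqrt (6*lam*Δ + Λ) := by
          have ha : (Nat.clog 2 nm : ℝ) ≤ 2 * (Nat.sqrt nm : ℝ) := by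
            exact_mod_cast clog_le_sqrt nm
          have hb : (Nat.sqrt nm : ℝ) ≤ Real.sqrt (nm : ℝ) :=
            Real.nat_sqrt_le_real_sqrt
          have hc : Real.sqrt (nm : ℝ) ≤ Real.sqrt (6*lam*Δ + Λ) :=
            Real.sqrt_le_sqrt hnm_le
          linarith
        nlinarith [mul_le_mul_of_nonneg_left hclog hδ]
      rcases le_total i j with hij | hij
      · refine main (j - i) (fun k => c (i + k)) (by simp)
          (by show c (i + (j - i)) = c j; congr 1; omega)
          (fun k hk => hgap (i + k) (by omega))
          (fun k hk => ⟨i + k, by omega, rfl⟩) ?_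
        have hlij := hlow i hi j hj
        have habs : |(i:ℝ) - (j:ℝ)| = ((j - i : ℕ) : ℝ) := by
          rw [Nat.cast_sub hij, abs_sub_comm]
          exact abs_of_nonneg (sub_nonneg.mpr (Nat.cast_le.mpr hij))
        rw [habs] at hlij
        nlinarith [mul_le_mul_of_nonneg_left hij6 hl0]
      · refine main (i - j) (fun k => c (i - k)) (by simp)
          (by show c (i - (i - j)) = c j; congr 1; omega)
          ?_ (fun k hk => ⟨i - k, by omega, rfl⟩) ?_
        · intro k hk
          have h1 : i - k = (i - k - 1) + 1 := by omega
          have h2' : i - (k+1) = i - k - 1 := by omega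
          show dist (c (i - k)) (c (i - (k+1))) ≤ D
          rw [h2', h1, dist_comm]
          exact hgap (i - k - 1) (by omega)
        · have hlij := hlow i hi j hj
          have habs : |(i:ℝ) - (j:ℝ)| = ((i - j : ℕ) : ℝ) := by
            rw [Nat.cast_sub hij]
            exact abs_of_nonneg (sub_nonneg.mpr (Nat.cast_le.mpr hij))
          rw [habs] at hlij
          nlinarith [mul_le_mul_of_nonneg_left hij6 hl0]
  -- now resolve the inequality `hkey`
  have hR : Δ ≤ R1 δ D lam Λ := by
    set s := Real.sqrt (6*lam*Δ + Λ) with hs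
    have hs0 : 0 ≤ s := Real.sqrt_nonneg _
    have harg : 0 ≤ 6*lam*Δ + Λ := by nlinarith [mul_nonneg hl0 hΔ0]
    have hs2 : s^2 = 6*lam*Δ + Λ := Real.sq_sqrt harg
    have hB0 : (0:ℝ) ≤ 12*lam*δ := by nlinarith [mul_nonneg hl0 hδ]
    have hC0 : (0:ℝ) ≤ 12*lam*δ + 6*lam*D + Λ := by
      nlinarith [mul_nonneg hl0 hδ, mul_nonneg hl0 hD]
    have hsB : s ≤ 12*lam*δ + (12*lam*δ + 6*lam*D + Λ) + 1 := by
      rcases le_or_gt s 1 with h | h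
      · linarith
      · have hs2' : s^2 ≤ (12*lam*δ)*s + (12*lam*δ + 6*lam*D + Λ) := by
          nlinarith [mul_le_mul_of_nonneg_left hkey (by linarith : (0:ℝ) ≤ 6*lam)]
        nlinarith [mul_le_mul_of_nonneg_left h.le hC0]
    have h2δs : 2*δ*s ≤ 2*δ*(12*lam*δ + (12*lam*δ + 6*lam*D + Λ) + 1) := by
      apply mul_le_mul_of_nonneg_left hsB (by linarith)
    have : Δ ≤ 2*δ + D + 2*δ*s := hkey
    unfold R1
    linarith
  intro p hp
  obtain ⟨t, ht, rfl⟩ := hp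
  obtain ⟨zi, hziK, hFt⟩ := hKc.exists_infDist_eq_dist hKne (γ t)
  obtain ⟨i, hi', rfl⟩ := hziK
  refine ⟨i, Set.mem_Iic.mp hi', ?_⟩
  rw [← hFt]
  exact le_trans (hmax' t ht) hR

end Morse

section Morse2

variable {X : Type*} [MetricSpace X]

/-- Morse stability, part 2: every point of a quasi-geodesic chain is `R2`-close
to the geodesic joining its ends. -/
lemma morse2 {δ D lam Λ : ℝ} (hδ : 0 ≤ δ) (hD : 0 ≤ D) (hlam : 1 ≤ lam) (hΛ : 0 ≤ Λ)
    (hX : GeodesicSpace X) (hthin : ThinTriangles X δ)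
    (n : ℕ) (c : ℕ → X) (hgap : ∀ i < n, dist (c i) (c (i + 1)) ≤ D)
    (hlow : ∀ i ≤ n, ∀ j ≤ n, |(i : ℝ) - (j : ℝ)| ≤ lam * dist (c i) (c j) + Λ)
    (γ : ℝ → X) (hγ : IsGeodesicFromTo γ (c 0) (c n)) :
    ∀ j ≤ n, ∃ q ∈ geodSeg γ (c 0) (c n), dist (c j) q ≤ R2 δ D lam Λ := by
  classical
  have hl0 : (0:ℝ) ≤ lam := by linarith
  have hR1 := R1_nonneg hδ hD hlam hΛ
  have hR2 := R2_nonneg hδ hD hlam hΛ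
  have hM1 := morse1 hδ hD hlam hΛ hX hthin n c hgap hlow γ hγ
  set d := dist (c 0) (c n) with hd
  have hd0 : 0 ≤ d := dist_nonneg
  set N := ⌈d⌉₊ with hN
  set t : ℕ → ℝ := fun k => min (k : ℝ) d with ht
  have htmem : ∀ k, t k ∈ Icc (0:ℝ) d :=
    fun k => ⟨le_min (Nat.cast_nonneg k) hd0, min_le_right _ _⟩
  have hex : ∀ k : ℕ, ∃ i, i ≤ n ∧ dist (γ (t k)) (c i) ≤ R1 δ D lam Λ := by
    intro k
    obtain ⟨i, hi, hdi⟩ := hM1 (γ (t k)) ⟨t k, htmem k, rfl⟩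
    exact ⟨i, hi, hdi⟩
  set idx : ℕ → ℕ := fun k =>
    if k = 0 then 0 else if N + 1 ≤ k then n else Classical.choose (hex k) with hidx
  have hidx_le : ∀ k, idx k ≤ n := by
    intro k
    by_cases h0 : k = 0
    · simp [hidx, h0]
    · by_cases hN1 : N + 1 ≤ k
      · simp only [hidx, if_neg h0, if_pos hN1, le_refl]
      · simp only [hidx, if_neg h0, if_neg hN1]
        exact (Classical.choose_spec (hex k)).1
  have hidx_d : ∀ k, dist (γ (t k)) (c (idx k)) ≤ R1 δ D lam Λ := by
    intro k
    by_cases h0 : k = 0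
    · subst h0
      have ht0 : t 0 = 0 := by
        show min ((0:ℕ):ℝ) d = 0
        rw [Nat.cast_zero]
        exact min_eq_left hd0
      have hidx0 : idx 0 = 0 := by simp [hidx]
      rw [ht0, hidx0, hγ.1, dist_self]
      exact hR1
    · by_cases hN1 : N + 1 ≤ k
      · have htd : t k = d := by
          show min ((k:ℕ):ℝ) d = d
          apply min_eq_right
          calc d ≤ (N : ℝ) := Nat.le_ceil d
            _ ≤ (k : ℝ) := by exact_mod_cast Nat.le_of_succ_le hN1
        have hidxk : idx k = n := by simp only [hidx, if_neg h0, if_pos hN1]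
        rw [htd, hidxk, hd, hγ.2.1, dist_self]
        exact hR1
      · have hidxk : idx k = Classical.choose (hex k) := by simp only [hidx, if_neg h0, if_neg hN1]
        rw [hidxk]
        exact (Classical.choose_spec (hex k)).2
  have hnet : ∀ k : ℕ, dist (γ (t k)) (γ (t (k+1))) ≤ 1 := by
    intro k
    rw [hγ.2.2 _ (htmem k) _ (htmem (k+1))]
    have h1 : t k ≤ t (k+1) := by
      show min ((k:ℕ):ℝ) d ≤ min (((k+1):ℕ):ℝ) d
      apply min_le_min _ le_rfl
      push_cast
      linarith
    have h2 : t (k+1) ≤ t k + 1 := by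
      simp only [ht]
      rcases le_total ((k:ℝ)) d with h | h
      · have : min ((k:ℝ)) d = (k:ℝ) := min_eq_left h
        rw [this]
        calc min (((k:ℕ)+1 : ℕ) : ℝ) d ≤ (((k:ℕ)+1 : ℕ) : ℝ) := min_le_left _ _
          _ = (k:ℝ) + 1 := by push_cast; ring
      · have hk : min ((k:ℝ)) d = d := min_eq_right h
        have hk1 : min (((k:ℕ)+1 : ℕ) : ℝ) d = d := by
          apply min_eq_right
          push_cast
          linarith
        rw [hk, hk1]
        linarith
    rw [abs_of_nonpos (by linarith)]
    linarith
  intro j hj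
  set P : ℕ → Prop := fun k => idx k ≤ j with hP
  have hP0 : P 0 := by simp [hP, hidx]
  set k₀ := Nat.findGreatest P (N+1) with hk₀
  have hk₀spec : P k₀ := Nat.findGreatest_spec (Nat.zero_le _) hP0
  have hk₀le : k₀ ≤ N + 1 := Nat.findGreatest_le _
  by_cases htop : k₀ = N + 1
  · -- then idx k₀ = n ≤ j, so j = n and c j is an endpoint
    have hin : idx k₀ = n := by simp [hidx, htop]
    have hjn : j = n := le_antisymm hj (by rw [← hin]; exact hk₀spec)
    refine ⟨γ d, ⟨d, ⟨hd0, le_rfl⟩, rfl⟩, ?_⟩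
    rw [hjn, hγ.2.1, dist_self]
    exact hR2
  · have hk₁le : k₀ + 1 ≤ N + 1 := by omega
    have hgt : ¬ P (k₀ + 1) :=
      Nat.findGreatest_is_greatest (by omega) hk₁le
    have hij1 : idx k₀ ≤ j := hk₀spec
    have hij2 : j < idx (k₀ + 1) := by
      simp only [hP, not_le] at hgt
      exact hgt
    have hi2n : idx (k₀+1) ≤ n := hidx_le (k₀+1)
    -- dist between consecutive selected chain points
    have hd12 : dist (c (idx k₀)) (c (idx (k₀+1))) ≤ 2 * R1 δ D lam Λ + 1 := by
      have h4 := dist_triangle4 (c (idx k₀)) (γ (t k₀)) (γ (t (k₀+1))) (c (idx (k₀+1)))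
      have hcm := dist_comm (c (idx k₀)) (γ (t k₀))
      have ha := hidx_d k₀
      have hb := hidx_d (k₀+1)
      have hcm2 := dist_comm (γ (t (k₀+1))) (c (idx (k₀+1)))
      have hn := hnet k₀
      linarith
    have hstep : ((idx (k₀+1) : ℝ) - (idx k₀ : ℝ)) ≤ lam * (2 * R1 δ D lam Λ + 1) + Λ := by
      have hl := hlow (idx (k₀+1)) hi2n (idx k₀) (hidx_le k₀)
      have habs : ((idx (k₀+1) : ℝ) - (idx k₀ : ℝ)) ≤ |(idx (k₀+1) : ℝ) - (idx k₀ : ℝ)| :=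
        le_abs_self _
      have hcm := dist_comm (c (idx (k₀+1))) (c (idx k₀))
      nlinarith [mul_le_mul_of_nonneg_left hd12 hl0]
    have hchain := chain_dist n c hgap j hj (idx k₀) hij1
    have hjle : ((j:ℝ) - (idx k₀ : ℝ)) ≤ (idx (k₀+1) : ℝ) - (idx k₀ : ℝ) := by
      have : (j : ℝ) ≤ (idx (k₀+1) : ℝ) := by exact_mod_cast hij2.le
      linarith
    have hcj : dist (c j) (c (idx k₀)) ≤ D * (lam * (2 * R1 δ D lam Λ + 1) + Λ) := by
      have hcm := dist_comm (c (idx k₀)) (c j)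
      nlinarith [mul_le_mul_of_nonneg_left hjle hD, mul_le_mul_of_nonneg_left hstep hD]
    refine ⟨γ (t k₀), ⟨t k₀, htmem k₀, rfl⟩, ?_⟩
    have htri := dist_triangle (c j) (c (idx k₀)) (γ (t k₀))
    have hcm := dist_comm (c (idx k₀)) (γ (t k₀))
    have ha := hidx_d k₀
    unfold R2
    linarith

end Morse2

section Main

variable {X Y : Type*} [MetricSpace X] [MetricSpace Y]

/-- Discretizing a geodesic in `Y` and mapping it by the coarse inverse `g`
produces a quasi-geodesic chain in `X`. -/
lemma chain_of_geod (g : Y → X) (lam C : ℝ) (hlam : 1 ≤ lam) (hC : 0 ≤ C)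
    (hgU : ∀ y₁ y₂ : Y, dist (g y₁) (g y₂) ≤ lam * dist y₁ y₂ + 3*lam*C)
    (hgL : ∀ y₁ y₂ : Y, dist y₁ y₂ ≤ lam * dist (g y₁) (g y₂) + 3*C)
    (u v : Y) (σ : ℝ → Y) (hσ : IsGeodesicFromTo σ u v) :
    (∀ k < ⌈dist u v⌉₊,
      dist (g (σ (min ((k:ℕ) : ℝ) (dist u v)))) (g (σ (min (((k+1):ℕ) : ℝ) (dist u v))))
        ≤ lam * (1 + 3*C)) ∧
    (∀ k ≤ ⌈dist u v⌉₊, ∀ k' ≤ ⌈dist u v⌉₊,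
      |(k : ℝ) - (k' : ℝ)| ≤
        lam * dist (g (σ (min ((k:ℕ) : ℝ) (dist u v)))) (g (σ (min ((k':ℕ) : ℝ) (dist u v))))
          + (3*C + 1)) := by
  have hl0 : (0:ℝ) ≤ lam := by linarith
  set L := dist u v with hL
  have hL0 : 0 ≤ L := dist_nonneg
  have hmem : ∀ k : ℕ, min ((k:ℕ) : ℝ) L ∈ Icc 0 L :=
    fun k => ⟨le_min (Nat.cast_nonneg k) hL0, min_le_right _ _⟩
  have hσd : ∀ k k' : ℕ, dist (σ (min ((k:ℕ):ℝ) L)) (σ (min ((k':ℕ):ℝ) L))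
      = |min ((k:ℕ):ℝ) L - min ((k':ℕ):ℝ) L| :=
    fun k k' => hσ.2.2 _ (hmem k) _ (hmem k')
  constructor
  · intro k hk
    have h1 : min ((k:ℕ):ℝ) L ≤ min (((k+1):ℕ):ℝ) L := by
      apply min_le_min _ le_rfl
      push_cast
      linarith
    have h2 : min (((k+1):ℕ):ℝ) L ≤ min ((k:ℕ):ℝ) L + 1 := by
      rcases le_total ((k:ℝ)) L with h | h
      · rw [min_eq_left h]
        calc min (((k+1):ℕ):ℝ) L ≤ (((k+1):ℕ):ℝ) := min_le_left _ _
          _ = (k:ℝ) + 1 := by push_cast; ring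
      · have ha : min ((k:ℕ):ℝ) L = L := min_eq_right h
        have hb : min (((k+1):ℕ):ℝ) L = L := by
          apply min_eq_right
          push_cast
          linarith
        rw [ha, hb]
        linarith
    have hd1 : dist (σ (min ((k:ℕ):ℝ) L)) (σ (min (((k+1):ℕ):ℝ) L)) ≤ 1 := by
      rw [hσd k (k+1), abs_of_nonpos (by linarith)]
      linarith
    have := hgU (σ (min ((k:ℕ):ℝ) L)) (σ (min (((k+1):ℕ):ℝ) L))
    nlinarith [mul_le_mul_of_nonneg_left hd1 hl0]
  · have key : ∀ k k' : ℕ, k ≤ k' → k' ≤ ⌈L⌉₊ →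
        (k':ℝ) - (k:ℝ) - 1 ≤ min ((k':ℕ):ℝ) L - min ((k:ℕ):ℝ) L := by
      intro k k' hkk hk'
      have hcast : (k:ℝ) ≤ (k':ℝ) := by exact_mod_cast hkk
      rcases le_total ((k':ℝ)) L with h | h
      · rw [min_eq_left h, min_eq_left (le_trans hcast h)]
        linarith
      · rw [min_eq_right h]
        have h1 : min ((k:ℕ):ℝ) L ≤ (k:ℝ) := min_le_left _ _
        have h2 : (k':ℝ) ≤ (⌈L⌉₊ : ℝ) := by exact_mod_cast hk'
        have h3 : (⌈L⌉₊ : ℝ) < L + 1 := Nat.ceil_lt_add_one hL0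
        linarith
    intro k hk k' hk'
    have habs : |min ((k:ℕ):ℝ) L - min ((k':ℕ):ℝ) L| ≤
        lam * dist (g (σ (min ((k:ℕ):ℝ) L))) (g (σ (min ((k':ℕ):ℝ) L))) + 3*C := by
      rw [← hσd k k']
      exact hgL _ _
    rcases le_total k k' with h | h
    · have h1 := key k k' h hk'
      have h2 : |(k:ℝ) - (k':ℝ)| = (k':ℝ) - (k:ℝ) := by
        rw [abs_sub_comm]
        exact abs_of_nonneg (sub_nonneg.mpr (Nat.cast_le.mpr h))
      have h3 : min ((k':ℕ):ℝ) L - min ((k:ℕ):ℝ) L ≤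
          |min ((k:ℕ):ℝ) L - min ((k':ℕ):ℝ) L| := by
        rw [abs_sub_comm]
        exact le_abs_self _
      rw [h2]
      linarith
    · have h1 := key k' k h hk
      have h2 : |(k:ℝ) - (k':ℝ)| = (k:ℝ) - (k':ℝ) :=
        abs_of_nonneg (sub_nonneg.mpr (Nat.cast_le.mpr h))
      have h3 : min ((k:ℕ):ℝ) L - min ((k':ℕ):ℝ) L ≤
          |min ((k:ℕ):ℝ) L - min ((k':ℕ):ℝ) L| := le_abs_self _
      rw [h2]
      linarith

end Main

/-- Gromov hyperbolicity is a quasi-isometry invariant among geodesic metric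
spaces: if `X` is `δ`-hyperbolic and there is a quasi-isometry `X → Y`, then
`Y` is `δ'`-hyperbolic for some constant `δ'`. -/
theorem hyperbolicity_quasiIsometry_invariant {X Y : Type*}
    [MetricSpace X] [MetricSpace Y]
    (hX : GeodesicSpace X) (hY : GeodesicSpace Y)
    (δ : ℝ) (hδ : 0 ≤ δ) (hthin : ThinTriangles X δ)
    (f : X → Y) (hf : IsQuasiIsometry f) :
    ∃ δ' : ℝ, 0 ≤ δ' ∧ ThinTriangles Y δ' := by
  classical
  obtain ⟨lam, C, hlam, hC, hfb, hfd⟩ := hf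
  choose g hg using hfd
  have hlam0 : (0:ℝ) < lam := lt_of_lt_of_le zero_lt_one hlam
  have hgU : ∀ y₁ y₂ : Y, dist (g y₁) (g y₂) ≤ lam * dist y₁ y₂ + 3*lam*C := by
    intro y₁ y₂
    have h1 := (hfb (g y₁) (g y₂)).1
    have h2 : dist (f (g y₁)) (f (g y₂)) ≤ dist y₁ y₂ + 2*C := by
      have h4 := dist_triangle4 (f (g y₁)) y₁ y₂ (f (g y₂))
      have a1 := hg y₁
      have a2 := hg y₂
      have hcm := dist_comm (f (g y₁)) y₁
      linarith
    have h3 : lam⁻¹ * dist (g y₁) (g y₂) ≤ dist y₁ y₂ + 3*C := by linarith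
    have h4 := mul_le_mul_of_nonneg_left h3 (le_of_lt hlam0)
    rw [← mul_assoc, mul_inv_cancel₀ (ne_of_gt hlam0), one_mul] at h4
    nlinarith
  have hgL : ∀ y₁ y₂ : Y, dist y₁ y₂ ≤ lam * dist (g y₁) (g y₂) + 3*C := by
    intro y₁ y₂
    have h1 := (hfb (g y₁) (g y₂)).2
    have h4 := dist_triangle4 y₁ (f (g y₁)) (f (g y₂)) y₂
    have a1 := hg y₁
    have a2 := hg y₂
    have hcm := dist_comm (f (g y₂)) y₂
    linarith
  set D := lam * (1 + 3*C) with hD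
  set Λ := 3*C + 1 with hΛdef
  have hD0 : 0 ≤ D := by nlinarith
  have hΛ0 : 0 ≤ Λ := by simp only [hΛdef]; linarith
  have hR1 := R1_nonneg (δ := δ) (D := D) (lam := lam) (Λ := Λ) hδ hD0 hlam hΛ0
  have hR2 := R2_nonneg (δ := δ) (D := D) (lam := lam) (Λ := Λ) hδ hD0 hlam hΛ0
  refine ⟨1 + 3*C + lam * (R2 δ D lam Λ + δ + R1 δ D lam Λ), by nlinarith, ?_⟩
  intro u v w σ₁ σ₂ σ₃ hσ₁ hσ₂ hσ₃ p hp
  obtain ⟨s, hs, rfl⟩ := hp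
  obtain ⟨hgap₁, hlow₁⟩ := chain_of_geod g lam C hlam hC hgU hgL u v σ₁ hσ₁
  obtain ⟨hgap₂, hlow₂⟩ := chain_of_geod g lam C hlam hC hgU hgL v w σ₂ hσ₂
  obtain ⟨hgap₃, hlow₃⟩ := chain_of_geod g lam C hlam hC hgU hgL w u σ₃ hσ₃
  set n₁ := ⌈dist u v⌉₊ with hn₁
  set n₂ := ⌈dist v w⌉₊ with hn₂
  set n₃ := ⌈dist w u⌉₊ with hn₃
  set c₁ : ℕ → X := fun k => g (σ₁ (min ((k:ℕ) : ℝ) (dist u v))) with hc₁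
  set c₂ : ℕ → X := fun k => g (σ₂ (min ((k:ℕ) : ℝ) (dist v w))) with hc₂
  set c₃ : ℕ → X := fun k => g (σ₃ (min ((k:ℕ) : ℝ) (dist w u))) with hc₃
  have hc₁0 : c₁ 0 = g u := by
    show g (σ₁ (min ((0:ℕ):ℝ) (dist u v))) = g u
    rw [Nat.cast_zero, min_eq_left dist_nonneg, hσ₁.1]
  have hc₁n : c₁ n₁ = g v := by
    show g (σ₁ (min ((n₁:ℕ):ℝ) (dist u v))) = g v
    rw [min_eq_right (Nat.le_ceil _), hσ₁.2.1]
  have hc₂0 : c₂ 0 = g v := by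
    show g (σ₂ (min ((0:ℕ):ℝ) (dist v w))) = g v
    rw [Nat.cast_zero, min_eq_left dist_nonneg, hσ₂.1]
  have hc₂n : c₂ n₂ = g w := by
    show g (σ₂ (min ((n₂:ℕ):ℝ) (dist v w))) = g w
    rw [min_eq_right (Nat.le_ceil _), hσ₂.2.1]
  have hc₃0 : c₃ 0 = g w := by
    show g (σ₃ (min ((0:ℕ):ℝ) (dist w u))) = g w
    rw [Nat.cast_zero, min_eq_left dist_nonneg, hσ₃.1]
  have hc₃n : c₃ n₃ = g u := by
    show g (σ₃ (min ((n₃:ℕ):ℝ) (dist w u))) = g u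
    rw [min_eq_right (Nat.le_ceil _), hσ₃.2.1]
  obtain ⟨α₁, hα₁⟩ := hX (g u) (g v)
  obtain ⟨α₂, hα₂⟩ := hX (g v) (g w)
  obtain ⟨α₃, hα₃⟩ := hX (g w) (g u)
  set k := ⌊s⌋₊ with hk
  have hkL : ((k:ℕ):ℝ) ≤ dist u v := le_trans (Nat.floor_le hs.1) hs.2
  have hk_le : k ≤ n₁ := le_trans (Nat.floor_mono hs.2) (Nat.floor_le_ceil _)
  have hα₁' : IsGeodesicFromTo α₁ (c₁ 0) (c₁ n₁) := by rw [hc₁0, hc₁n]; exact hα₁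
  obtain ⟨q₁, hq₁seg, hq₁d⟩ :=
    morse2 hδ hD0 hlam hΛ0 hX hthin n₁ c₁ hgap₁ hlow₁ α₁ hα₁' k hk_le
  rw [hc₁0, hc₁n] at hq₁seg
  obtain ⟨q₂, hq₂mem, hq₂d⟩ :=
    hthin (g u) (g v) (g w) α₁ α₂ α₃ hα₁ hα₂ hα₃ q₁ hq₁seg
  have hsk : dist (σ₁ s) (σ₁ (min ((k:ℕ):ℝ) (dist u v))) ≤ 1 := by
    rw [min_eq_left hkL,
      hσ₁.2.2 s hs ((k:ℕ):ℝ) ⟨Nat.cast_nonneg _, hkL⟩,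
      abs_of_nonneg (sub_nonneg.mpr (Nat.floor_le hs.1))]
    have := Nat.lt_floor_add_one s
    linarith
  rcases hq₂mem with h | h
  · -- q₂ on the geodesic from g v to g w: project to σ₂
    have hα₂' : IsGeodesicFromTo α₂ (c₂ 0) (c₂ n₂) := by rw [hc₂0, hc₂n]; exact hα₂
    have h' : q₂ ∈ geodSeg α₂ (c₂ 0) (c₂ n₂) := by rw [hc₂0, hc₂n]; exact h
    obtain ⟨m, hm, hmd⟩ :=
      morse1 hδ hD0 hlam hΛ0 hX hthin n₂ c₂ hgap₂ hlow₂ α₂ hα₂' q₂ h'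
    refine ⟨σ₂ (min ((m:ℕ):ℝ) (dist v w)),
      Or.inl ⟨min ((m:ℕ):ℝ) (dist v w),
        ⟨le_min (Nat.cast_nonneg _) dist_nonneg, min_le_right _ _⟩, rfl⟩, ?_⟩
    have hXd : dist (c₁ k) (c₂ m) ≤ R2 δ D lam Λ + δ + R1 δ D lam Λ := by
      have h4 := dist_triangle4 (c₁ k) q₁ q₂ (c₂ m)
      linarith
    have hYd : dist (σ₁ (min ((k:ℕ):ℝ) (dist u v))) (σ₂ (min ((m:ℕ):ℝ) (dist v w)))
        ≤ lam * (R2 δ D lam Λ + δ + R1 δ D lam Λ) + 3*C := by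
      have h5 := hgL (σ₁ (min ((k:ℕ):ℝ) (dist u v))) (σ₂ (min ((m:ℕ):ℝ) (dist v w)))
      have h6 : dist (g (σ₁ (min ((k:ℕ):ℝ) (dist u v)))) (g (σ₂ (min ((m:ℕ):ℝ) (dist v w))))
          = dist (c₁ k) (c₂ m) := rfl
      rw [h6] at h5
      nlinarith [mul_le_mul_of_nonneg_left hXd (le_of_lt hlam0)]
    have htri := dist_triangle (σ₁ s) (σ₁ (min ((k:ℕ):ℝ) (dist u v)))
      (σ₂ (min ((m:ℕ):ℝ) (dist v w)))
    linarith
  · -- q₂ on the geodesic from g w to g u: project to σ₃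
    have hα₃' : IsGeodesicFromTo α₃ (c₃ 0) (c₃ n₃) := by rw [hc₃0, hc₃n]; exact hα₃
    have h' : q₂ ∈ geodSeg α₃ (c₃ 0) (c₃ n₃) := by rw [hc₃0, hc₃n]; exact h
    obtain ⟨m, hm, hmd⟩ :=
      morse1 hδ hD0 hlam hΛ0 hX hthin n₃ c₃ hgap₃ hlow₃ α₃ hα₃' q₂ h'
    refine ⟨σ₃ (min ((m:ℕ):ℝ) (dist w u)),
      Or.inr ⟨min ((m:ℕ):ℝ) (dist w u),
        ⟨le_min (Nat.cast_nonneg _) dist_nonneg, min_le_right _ _⟩, rfl⟩, ?_⟩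
    have hXd : dist (c₁ k) (c₃ m) ≤ R2 δ D lam Λ + δ + R1 δ D lam Λ := by
      have h4 := dist_triangle4 (c₁ k) q₁ q₂ (c₃ m)
      linarith
    have hYd : dist (σ₁ (min ((k:ℕ):ℝ) (dist u v))) (σ₃ (min ((m:ℕ):ℝ) (dist w u)))
        ≤ lam * (R2 δ D lam Λ + δ + R1 δ D lam Λ) + 3*C := by
      have h5 := hgL (σ₁ (min ((k:ℕ):ℝ) (dist u v))) (σ₃ (min ((m:ℕ):ℝ) (dist w u)))
      have h6 : dist (g (σ₁ (min ((k:ℕ):ℝ) (dist u v)))) (g (σ₃ (min ((m:ℕ):ℝ) (dist w u))))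
          = dist (c₁ k) (c₃ m) := rfl
      rw [h6] at h5
      nlinarith [mul_le_mul_of_nonneg_left hXd (le_of_lt hlam0)]
    have htri := dist_triangle (σ₁ s) (σ₁ (min ((k:ℕ):ℝ) (dist u v)))
      (σ₃ (min ((m:ℕ):ℝ) (dist w u)))
    linarith
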